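/- Let φ : ℤ → ℝ/ℤ be a linear phase, φ(n) = αn + β. Then for every ε > 0 there is κ > 0 such that any finite arithmetic progression P ⊆ ℤ with |P| sufficiently large can be partitioned into arithmetic progressions P_1, …, P_m, each of size at least |P|^κ, such that for every i and all n, n' ∈ P_i one has ‖φ(n) − φ(n')‖_{ℝ/ℤ} ≤ ε. -/

import Mathlib

/-- Distance from a real number to the nearest integer, i.e. `‖x‖_{ℝ/ℤ}`. -/
noncomputable def distRZ (x : ℝ) : ℝ := |x - round x|

/-- `P` is a finite arithmetic progression in `ℤ`. -/
def IsAP (P : Finset ℤ) : Prop :=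
  ∃ a d : ℤ, P = (Finset.range P.card).image (fun i : ℕ => a + (i : ℤ) * d)

/-- `Ps` is a partition of `P` into nonempty pieces. -/
def IsPartitionOf (P : Finset ℤ) (Ps : Finset (Finset ℤ)) : Prop :=
  (∀ Q ∈ Ps, Q.Nonempty) ∧ (Ps : Set (Finset ℤ)).PairwiseDisjoint id ∧
    Ps.biUnion id = P

lemma distRZ_le_abs_sub (x : ℝ) (j : ℤ) : distRZ x ≤ |x - j| := by
  unfold distRZ
  rcases eq_or_ne j (round x) with h | h
  · rw [h]
  · have h1 : |x - round x| ≤ 1/2 := abs_sub_round x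
    have h2 : (1 : ℝ) ≤ |((j : ℝ)) - round x| := by
      rw [show ((j:ℝ) - (round x : ℤ)) = ((j - round x : ℤ) : ℝ) by push_cast; ring]
      rw [← Int.cast_abs]
      exact_mod_cast Int.one_le_abs (sub_ne_zero.mpr h)
    have h3 : |(j:ℝ) - round x| ≤ |(j:ℝ) - x| + |x - round x| := by
      calc |(j:ℝ) - round x| = |((j:ℝ) - x) + (x - round x)| := by ring_nf
        _ ≤ _ := abs_add_le _ _
    rw [abs_sub_comm x j]
    linarith

lemma distRZ_nonneg (x : ℝ) : 0 ≤ distRZ x := abs_nonneg _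

lemma distRZ_int_mul (k : ℤ) (x : ℝ) : distRZ ((k:ℝ) * x) ≤ |(k:ℝ)| * distRZ x := by
  have h := distRZ_le_abs_sub ((k:ℝ) * x) (k * round x)
  calc distRZ ((k:ℝ)*x) ≤ |(k:ℝ)*x - ((k * round x : ℤ) : ℝ)| := h
    _ = |(k:ℝ)| * |x - round x| := by push_cast; rw [← abs_mul]; ring_nf
    _ = |(k:ℝ)| * distRZ x := rfl

lemma claimA (q h r : ℕ) (hq : 0 < q) (hr : r < q) (hh : q ≤ h) (s : ℕ) :
    s < (h + (q - 1) - r) / q ↔ r + s * q < h := by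
  rw [show (s < (h + (q - 1) - r) / q) ↔ (s + 1 ≤ (h + (q - 1) - r) / q) from Iff.rfl,
    Nat.le_div_iff_mul_le hq, add_mul, one_mul]
  omega

set_option maxHeartbeats 1000000 in
/-- A linear phase `n ↦ αn + β (mod 1)` is almost constant on subprogressions:
for every `ε > 0` there is `κ > 0` such that every sufficiently long progression
`P` can be partitioned into progressions of size at least `|P|^κ` on each of
which the phase has diameter at most `ε` in `ℝ/ℤ`. -/
theorem linear_phase_almost_constant (α β : ℝ) (ε : ℝ) (hε : 0 < ε) :
    ∃ κ : ℝ, 0 < κ ∧ ∃ L0 : ℕ, ∀ P : Finset ℤ, IsAP P → L0 ≤ P.card →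
      ∃ Ps : Finset (Finset ℤ), IsPartitionOf P Ps ∧
        ∀ Q ∈ Ps, IsAP Q ∧ (P.card : ℝ) ^ κ ≤ (Q.card : ℝ) ∧
          ∀ n ∈ Q, ∀ n' ∈ Q,
            distRZ ((α * (n : ℝ) + β) - (α * (n' : ℝ) + β)) ≤ ε := by
  set ε' : ℝ := min ε (1/2) with hε'def
  have hε'pos : 0 < ε' := lt_min hε (by norm_num)
  have hε'le2 : ε' ≤ 1/2 := min_le_right _ _
  have hε'leε : ε' ≤ ε := min_le_left _ _
  set B : ℕ := ⌈3 / ε'⌉₊ with hBdef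
  have hB : (3:ℝ)/ε' ≤ B := Nat.le_ceil _
  refine ⟨1/4, by norm_num, ((B+2)^2)^2, ?_⟩
  intro P hAP hL
  obtain ⟨a, d, hP⟩ := hAP
  set L := P.card with hLdef
  set nR := Nat.sqrt L with hnRdef
  have hnRge : (B+2)^2 ≤ nR := by
    have h := Nat.sqrt_le_sqrt hL
    rwa [Nat.sqrt_eq'] at h
  have hnR2 : 2 ≤ nR := by
    refine le_trans ?_ hnRge
    calc 2 ≤ B + 2 := by omega
      _ ≤ (B+2)^2 := Nat.le_self_pow (by norm_num) _
  have hBnR : B ≤ nR := by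
    refine le_trans ?_ hnRge
    calc B ≤ B + 2 := by omega
      _ ≤ (B+2)^2 := Nat.le_self_pow (by norm_num) _
  have hnRreal : (3:ℝ)/ε' ≤ (nR:ℝ) := le_trans hB (by exact_mod_cast hBnR)
  have hLge : nR * nR ≤ L := by have := Nat.sqrt_le' L; rwa [pow_two] at this
  have hL4 : 4 ≤ L := le_trans (by calc 4 = 2*2 := rfl
    _ ≤ nR * nR := Nat.mul_le_mul hnR2 hnR2) hLge
  have hd : d ≠ 0 := by
    intro h
    have hsub : P ⊆ {a} := by
      rw [hP]
      intro x hx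
      simp only [Finset.mem_image, Finset.mem_range] at hx
      obtain ⟨i, _, hi⟩ := hx
      simp [← hi, h]
    have := Finset.card_le_card hsub
    simp only [Finset.card_singleton] at this
    omega
  -- Dirichlet
  obtain ⟨j, qZ, hq0, hqn, hdir⟩ :=
    Real.exists_int_int_abs_mul_sub_le (α * (d:ℝ)) (show 0 < nR by omega)
  set q : ℕ := qZ.toNat with hqdef
  have hqZ : (q:ℤ) = qZ := Int.toNat_of_nonneg hq0.le
  have hq0' : 0 < q := by omega
  have hqn' : q ≤ nR := by exact_mod_cast hqZ ▸ hqn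
  have hdist : distRZ ((q:ℝ) * (α * (d:ℝ))) ≤ 1 / ((nR:ℝ) + 1) := by
    refine le_trans (distRZ_le_abs_sub _ j) ?_
    have hc : ((q:ℕ):ℝ) = ((qZ:ℤ):ℝ) := by exact_mod_cast hqZ
    rw [hc]
    exact hdir
  -- block parameters
  set m : ℕ := ⌊ε' * ((nR:ℝ)+1) / 3⌋₊ + 1 with hmdef
  have hm1 : 1 ≤ m := Nat.le_add_left 1 _
  have hmub : (m:ℝ) - 1 ≤ ε' * ((nR:ℝ)+1) / 3 := by
    have h := Nat.floor_le (show (0:ℝ) ≤ ε' * ((nR:ℝ)+1)/3 from div_nonneg (mul_nonneg hε'pos.le (by have := (Nat.cast_nonneg nR : (0:ℝ) ≤ nR); linarith)) (by norm_num))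
    rw [hmdef]; push_cast; linarith
  have hmlb : ε' * ((nR:ℝ)+1) / 3 < (m:ℝ) := by
    have h := Nat.lt_floor_add_one (ε' * ((nR:ℝ)+1)/3)
    rw [hmdef]; push_cast; linarith
  -- key arithmetic bound : L^(1/4) ≤ m
  have hLpos : (0:ℝ) < (L:ℝ) := by
    have : 0 < L := by omega
    exact_mod_cast this
  have e3 : (3:ℝ)/ε' ≤ (L:ℝ)^((1:ℝ)/4) := by
    have h1 : ((B:ℝ)+2)^(4:ℕ) ≤ (L:ℝ) := by
      have h0 : ((B+2)^2)^2 = (B+2)^4 := by ring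
      have : (B+2)^4 ≤ L := h0 ▸ hL
      exact_mod_cast this
    have h2 : ((B:ℝ)+2) = (((B:ℝ)+2)^(4:ℕ))^((1:ℝ)/4) := by
      rw [← Real.rpow_natCast ((B:ℝ)+2) 4, ← Real.rpow_mul (by positivity)]
      norm_num
    calc (3:ℝ)/ε' ≤ (B:ℝ) := hB
      _ ≤ (B:ℝ)+2 := by linarith
      _ = (((B:ℝ)+2)^(4:ℕ))^((1:ℝ)/4) := h2
      _ ≤ (L:ℝ)^((1:ℝ)/4) := Real.rpow_le_rpow (by positivity) h1 (by norm_num)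
  have e2 : (L:ℝ)^((1:ℝ)/2) ≤ (nR:ℝ)+1 := by
    have h0 : L < (nR+1)^2 := Nat.lt_succ_sqrt' L
    have h1 : (L:ℝ) ≤ ((nR:ℝ)+1)^(2:ℕ) := by
      have : (L:ℝ) < ((nR+1:ℕ):ℝ)^(2:ℕ) := by exact_mod_cast h0
      push_cast at this
      push_cast
      linarith
    calc (L:ℝ)^((1:ℝ)/2) ≤ (((nR:ℝ)+1)^(2:ℕ))^((1:ℝ)/2) :=
          Real.rpow_le_rpow (Nat.cast_nonneg _) h1 (by norm_num)
      _ = (nR:ℝ)+1 := by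
          rw [← Real.rpow_natCast ((nR:ℝ)+1) 2, ← Real.rpow_mul (by have := (Nat.cast_nonneg nR : (0:ℝ) ≤ nR); linarith)]
          norm_num
  have e1 : (L:ℝ)^((1:ℝ)/4) * (L:ℝ)^((1:ℝ)/4) = (L:ℝ)^((1:ℝ)/2) := by
    rw [← Real.rpow_add hLpos]
    norm_num
  have key : (L:ℝ)^((1:ℝ)/4) ≤ (m:ℝ) := by
    set X := (L:ℝ)^((1:ℝ)/4) with hXdef
    have h0 : (0:ℝ) ≤ X := Real.rpow_nonneg hLpos.le _
    have hX3 : 3 ≤ ε' * X := by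
      rw [div_le_iff₀ hε'pos] at e3
      linarith
    have hchain : X * 3 ≤ ε' * ((nR:ℝ)+1) := by
      calc X * 3 ≤ X * (ε' * X) := by nlinarith
        _ = ε' * (X * X) := by ring
        _ = ε' * (L:ℝ)^((1:ℝ)/2) := by rw [e1]
        _ ≤ ε' * ((nR:ℝ)+1) := by nlinarith
    linarith
  set M : ℕ := m * q with hMdef
  have hMpos : 0 < M := Nat.mul_pos hm1 hq0'
  have hqM : q ≤ M := by
    calc q = 1 * q := (one_mul q).symm
      _ ≤ m * q := mul_le_mul_left hm1 q
  have hML : M ≤ L := by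
    have h2 : (m:ℝ) ≤ ((nR:ℝ)+1)/6 + 1 := by nlinarith
    have h3 : (q:ℝ) ≤ (nR:ℝ) := by exact_mod_cast hqn'
    have h6 : ((nR:ℝ))*(nR:ℝ) ≤ (L:ℝ) := by exact_mod_cast hLge
    have hnr2 : (2:ℝ) ≤ (nR:ℝ) := by exact_mod_cast hnR2
    have hq0r : (0:ℝ) ≤ (q:ℝ) := by positivity
    have : (M:ℝ) ≤ (L:ℝ) := by
      have hM' : (M:ℝ) = (m:ℝ) * (q:ℝ) := by rw [hMdef]; push_cast; ring
      nlinarith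
    exact_mod_cast this
  set k : ℕ := L / M with hkdef
  have hk1 : 1 ≤ k := (Nat.one_le_div_iff hMpos).mpr hML
  have hkM : k * M ≤ L := Nat.div_mul_le_self L M
  have hLk : L < k * M + M := by
    have h1 : M * k + L % M = L := Nat.div_add_mod L M
    have h2 : L % M < M := Nat.mod_lt L hMpos
    have h3 : M * k = k * M := by ring
    omega
  -- interval endpoints, piece lengths, index parametrization
  set hi : ℕ → ℕ := fun t => if t = k - 1 then L else (t+1)*M with hhidef
  have hival : ∀ t, hi t = if t = k - 1 then L else (t+1)*M := fun _ => rfl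
  set c : ℕ → ℕ → ℕ := fun t r => (hi t - t*M + (q - 1) - r) / q with hcdef
  have hcval : ∀ t r, c t r = (hi t - t*M + (q - 1) - r) / q := fun _ _ => rfl
  set g : ℕ → ℕ → ℕ → ℕ := fun t r s => t*M + r + s*q with hgdef
  have hgval : ∀ t r s, g t r s = t*M + r + s*q := fun _ _ _ => rfl
  have hHfacts : ∀ t < k, t*M + M ≤ hi t ∧ hi t ≤ t*M + (2*M - 1) ∧ hi t ≤ L := by
    intro t ht
    rw [hival]
    by_cases htk : t = k - 1
    · subst htk
      rw [if_pos rfl]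
      have e : (k-1)*M + M = k*M := by
        calc (k-1)*M + M = ((k-1)+1)*M := by ring
          _ = k*M := by rw [show k - 1 + 1 = k by omega]
      omega
    · rw [if_neg htk]
      have h1 : (t+1)*M = t*M + M := by ring
      have h2 : (t+2)*M ≤ k*M := mul_le_mul_left (by omega) M
      have h3 : (t+2)*M = t*M + M + M := by ring
      omega
  have hcs : ∀ t < k, ∀ r < q, ∀ s : ℕ, (s < c t r ↔ t*M + r + s*q < hi t) := by
    intro t ht r hr s
    obtain ⟨h1, h2, h3⟩ := hHfacts t ht
    have hqh : q ≤ hi t - t*M := by omega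
    have key := claimA q (hi t - t*M) r hq0' hr hqh s
    rw [hcval t r, key]
    omega
  have hcm : ∀ t < k, ∀ r < q, m ≤ c t r ∧ c t r ≤ 2*m := by
    intro t ht r hr
    obtain ⟨h1, h2, h3⟩ := hHfacts t ht
    constructor
    · rw [hcval, Nat.le_div_iff_mul_le hq0']
      have hmq : m * q = M := hMdef.symm
      omega
    · by_contra hcon
      push_neg at hcon
      have h4 : 2*m + 1 ≤ c t r := hcon
      rw [hcval] at h4
      have h5 := (Nat.le_div_iff_mul_le hq0').mp h4
      have h6 : (2*m+1) * q = 2*M + q := by rw [hMdef]; ring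
      omega
  -- residues
  have hmod : ∀ t r s, r < q → (g t r s) % q = r := by
    intro t r s hr
    rw [hgval, hMdef, show t * (m*q) + r + s * q = (r + t*m*q) + s * q by ring,
      Nat.add_mul_mod_self_right, Nat.add_mul_mod_self_right, Nat.mod_eq_of_lt hr]
  have htdet : ∀ t < k, ∀ i, t*M ≤ i → i < hi t → t = min (i / M) (k-1) := by
    intro t ht i hlo hhi
    by_cases htk : t = k - 1
    · subst htk
      have h1 : k - 1 ≤ i / M := (Nat.le_div_iff_mul_le hMpos).mpr (by omega)
      omega
    · rw [hival, if_neg htk] at hhi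
      have h1 : i / M = t := Nat.div_eq_of_lt_le hlo hhi
      omega
  have huniq : ∀ t < k, ∀ r < q, ∀ t' < k, ∀ r' < q, ∀ s s',
      s < c t r → s' < c t' r' → g t r s = g t' r' s' → t = t' ∧ r = r' ∧ s = s' := by
    intro t ht r hr t' ht' r' hr' s s' hs hs' heq
    have e1 := hmod t r s hr
    rw [heq] at e1
    have e2 := hmod t' r' s' hr'
    have h1 : r = r' := by omega
    have hlo : t*M ≤ g t r s := by rw [hgval]; omega
    have hhi1 : g t r s < hi t := by
      have := (hcs t ht r hr s).mp hs
      rw [hgval]; omega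
    have hlo2 : t'*M ≤ g t' r' s' := by rw [hgval]; omega
    have hhi2 : g t' r' s' < hi t' := by
      have := (hcs t' ht' r' hr' s').mp hs'
      rw [hgval]; omega
    have h2 : t = t' := by
      rw [htdet t ht _ hlo hhi1, heq, ← htdet t' ht' _ hlo2 hhi2]
    subst h2; subst h1
    refine ⟨rfl, rfl, ?_⟩
    rw [hgval, hgval] at heq
    have h4 : s * q = s' * q := by omega
    exact Nat.eq_of_mul_eq_mul_right hq0' h4
  -- coverage
  have hcover : ∀ i < L, ∃ t < k, ∃ r < q, ∃ s < c t r, g t r s = i := by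
    intro i hiL
    set t := min (i / M) (k-1) with htdef2
    have htk : t < k := by omega
    have hrq : i % q < q := Nat.mod_lt i hq0'
    have hloi : t*M ≤ i := by
      have h1 : t ≤ i / M := by omega
      calc t*M ≤ (i/M)*M := mul_le_mul_left h1 M
        _ ≤ i := Nat.div_mul_le_self i M
    have hhii : i < hi t := by
      rw [hival]
      by_cases htk2 : t = k-1
      · rw [if_pos htk2]; exact hiL
      · rw [if_neg htk2]
        have h3 : t = i / M := by omega
        have h4 : M * (i/M) + i % M = i := Nat.div_add_mod i M
        have h5 : i % M < M := Nat.mod_lt i hMpos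
        have h6 : (t+1)*M = t*M + M := by ring
        have h7 : t * M = M * (i/M) := by rw [h3]; ring
        omega
    have hiq : i = (i - t*M) + (t*m)*q := by
      have : t*M = (t*m)*q := by rw [hMdef]; ring
      omega
    have hmodeq : (i - t*M) % q = i % q := by
      conv_rhs => rw [hiq]
      rw [Nat.add_mul_mod_self_right]
    have hsm : q*((i - t*M)/q) + (i-t*M)%q = i - t*M := Nat.div_add_mod _ _
    refine ⟨t, htk, i % q, hrq, (i - t*M)/q, ?_, ?_⟩
    · rw [hcs t htk _ hrq]
      have : q*((i - t*M)/q) = ((i - t*M)/q)*q := by ring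
      omega
    · rw [hgval]
      have : q*((i - t*M)/q) = ((i - t*M)/q)*q := by ring
      omega
  -- the integer-level pieces
  set f : ℕ → ℤ := fun i : ℕ => a + (i:ℤ) * d with hfdef
  have hfinj : Function.Injective f := by
    intro i i' h
    have h2 : (i:ℤ)*d = (i':ℤ)*d := by
      have h' : a + (i:ℤ)*d = a + (i':ℤ)*d := h
      linarith
    have h3 := mul_right_cancel₀ hd h2
    exact_mod_cast h3
  have hqd : (q:ℤ)*d ≠ 0 := mul_ne_zero (by exact_mod_cast hq0'.ne') hd
  set F : ℕ → ℕ → ℕ → ℤ :=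
    fun t r => fun s : ℕ => (a + ((t*M + r : ℕ):ℤ)*d) + (s:ℤ) * ((q:ℤ)*d) with hFdef
  have hFval : ∀ t r s, F t r s = (a + ((t*M + r : ℕ):ℤ)*d) + (s:ℤ) * ((q:ℤ)*d) :=
    fun _ _ _ => rfl
  have hFg : ∀ t r s, F t r s = f (g t r s) := by
    intro t r s
    rw [hFval, hgval, hfdef]
    push_cast
    ring
  have hFinj : ∀ t r, Function.Injective (F t r) := by
    intro t r s s' h
    rw [hFval, hFval] at h
    have h2 : (s:ℤ)*((q:ℤ)*d) = (s':ℤ)*((q:ℤ)*d) := by linarith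
    have h3 := mul_right_cancel₀ hqd h2
    exact_mod_cast h3
  set PieceZ : ℕ → ℕ → Finset ℤ :=
    fun t r => (Finset.range (c t r)).image (F t r) with hPZdef
  have hPZval : ∀ t r, PieceZ t r = (Finset.range (c t r)).image (F t r) := fun _ _ => rfl
  have hcard : ∀ t r, (PieceZ t r).card = c t r := by
    intro t r
    rw [hPZval, Finset.card_image_of_injective _ (hFinj t r), Finset.card_range]
  have hmem : ∀ t r x, x ∈ PieceZ t r ↔ ∃ s, s < c t r ∧ F t r s = x := by
    intro t r x
    rw [hPZval]
    simp [Finset.mem_image, Finset.mem_range]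
  set Ps : Finset (Finset ℤ) :=
    (Finset.range k ×ˢ Finset.range q).image (fun p => PieceZ p.1 p.2) with hPsdef
  have hPsmem : ∀ Q, Q ∈ Ps ↔ ∃ t, t < k ∧ ∃ r, r < q ∧ PieceZ t r = Q := by
    intro Q
    rw [hPsdef]
    simp only [Finset.mem_image, Finset.mem_product, Finset.mem_range, Prod.exists]
    constructor
    · rintro ⟨t, r, ⟨ht, hr⟩, hQ⟩
      exact ⟨t, ht, r, hr, hQ⟩
    · rintro ⟨t, ht, r, hr, hQ⟩
      exact ⟨t, r, ⟨ht, hr⟩, hQ⟩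
  -- diameter bound for each piece
  have hdiam : ∀ t < k, ∀ r < q, ∀ n ∈ PieceZ t r, ∀ n' ∈ PieceZ t r,
      distRZ ((α * (n:ℝ) + β) - (α * (n':ℝ) + β)) ≤ ε := by
    intro t ht r hr n hn n' hn'
    obtain ⟨s, hs, hFs⟩ := (hmem t r n).mp hn
    obtain ⟨s', hs', hFs'⟩ := (hmem t r n').mp hn'
    have hc2 := (hcm t ht r hr).2
    have harg : (α * (n:ℝ) + β) - (α * (n':ℝ) + β)
        = (((s:ℤ) - (s':ℤ) : ℤ):ℝ) * ((q:ℝ) * (α * (d:ℝ))) := by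
      rw [← hFs, ← hFs', hFval, hFval]
      push_cast
      ring
    have habs : |(((s:ℤ) - (s':ℤ) : ℤ):ℝ)| ≤ 2*(m:ℝ) - 1 := by
      have hsA : (s:ℝ) ≤ 2*(m:ℝ) - 1 := by
        have : s + 1 ≤ 2*m := by omega
        have h' : (s:ℝ) + 1 ≤ 2*(m:ℝ) := by exact_mod_cast this
        linarith
      have hsB : (s':ℝ) ≤ 2*(m:ℝ) - 1 := by
        have : s' + 1 ≤ 2*m := by omega
        have h' : (s':ℝ) + 1 ≤ 2*(m:ℝ) := by exact_mod_cast this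
        linarith
      have hcast : (((s:ℤ) - (s':ℤ) : ℤ):ℝ) = (s:ℝ) - (s':ℝ) := by push_cast; ring
      rw [hcast, abs_le]
      have h0s : (0:ℝ) ≤ (s:ℝ) := Nat.cast_nonneg s
      have h0s' : (0:ℝ) ≤ (s':ℝ) := Nat.cast_nonneg s'
      exact ⟨by linarith, by linarith⟩
    have hn1 : (0:ℝ) < (nR:ℝ)+1 := by have := (Nat.cast_nonneg nR : (0:ℝ) ≤ nR); linarith
    calc distRZ ((α * (n:ℝ) + β) - (α * (n':ℝ) + β))
        = distRZ ((((s:ℤ) - (s':ℤ) : ℤ):ℝ) * ((q:ℝ) * (α * (d:ℝ)))) := by rw [harg]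
      _ ≤ |(((s:ℤ) - (s':ℤ) : ℤ):ℝ)| * distRZ ((q:ℝ) * (α * (d:ℝ))) :=
          distRZ_int_mul _ _
      _ ≤ (2*(m:ℝ) - 1) * (1/((nR:ℝ)+1)) := by
          apply mul_le_mul habs hdist (distRZ_nonneg _)
          have : (1:ℝ) ≤ (m:ℝ) := by exact_mod_cast hm1
          linarith
      _ ≤ ε' := by
          rw [mul_one_div, div_le_iff₀ hn1]
          have h3 : 3 ≤ ε' * ((nR:ℝ)+1) := by
            rw [div_le_iff₀ hε'pos] at hnRreal
            nlinarith
          linarith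
      _ ≤ ε := hε'leε
  -- assemble
  refine ⟨Ps, ⟨?_, ?_, ?_⟩, ?_⟩
  · -- nonempty
    intro Q hQ
    obtain ⟨t, ht, r, hr, rfl⟩ := (hPsmem Q).mp hQ
    have hc1 := (hcm t ht r hr).1
    refine ⟨F t r 0, ?_⟩
    rw [hmem]
    exact ⟨0, by omega, rfl⟩
  · -- pairwise disjoint
    intro Q hQ Q' hQ' hne
    simp only [Function.onFun, id] at *
    obtain ⟨t, ht, r, hr, rfl⟩ := (hPsmem Q).mp (Finset.mem_coe.mp hQ)
    obtain ⟨t', ht', r', hr', rfl⟩ := (hPsmem Q').mp (Finset.mem_coe.mp hQ')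
    rw [Finset.disjoint_left]
    intro x hx hx'
    obtain ⟨s, hs, hFs⟩ := (hmem t r x).mp hx
    obtain ⟨s', hs', hFs'⟩ := (hmem t' r' x).mp hx'
    have hgg : g t r s = g t' r' s' := by
      apply hfinj
      rw [← hFg, ← hFg, hFs, hFs']
    obtain ⟨h1, h2, h3⟩ := huniq t ht r hr t' ht' r' hr' s s' hs hs' hgg
    subst h1; subst h2
    exact hne rfl
  · -- biUnion = P
    apply Finset.ext
    intro x
    simp only [Finset.mem_biUnion, id]
    constructor
    · rintro ⟨Q, hQ, hx⟩
      obtain ⟨t, ht, r, hr, rfl⟩ := (hPsmem Q).mp hQ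
      obtain ⟨s, hs, hFs⟩ := (hmem t r x).mp hx
      have hglt : g t r s < L := by
        have h1 := (hcs t ht r hr s).mp hs
        have h2 := (hHfacts t ht).2.2
        rw [hgval]
        omega
      rw [hP]
      simp only [Finset.mem_image, Finset.mem_range]
      exact ⟨g t r s, hglt, by rw [← hFg]; exact hFs⟩
    · intro hx
      rw [hP] at hx
      simp only [Finset.mem_image, Finset.mem_range] at hx
      obtain ⟨i, hiL, hfi⟩ := hx
      obtain ⟨t, ht, r, hr, s, hs, hg⟩ := hcover i hiL
      refine ⟨PieceZ t r, (hPsmem _).mpr ⟨t, ht, r, hr, rfl⟩, ?_⟩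
      rw [hmem]
      exact ⟨s, hs, by rw [hFg, hg]; exact hfi⟩
  · -- each piece : AP, size, diameter
    intro Q hQ
    obtain ⟨t, ht, r, hr, rfl⟩ := (hPsmem Q).mp hQ
    refine ⟨?_, ?_, hdiam t ht r hr⟩
    · exact ⟨a + ((t*M + r : ℕ):ℤ)*d, (q:ℤ)*d, by rw [hcard, hPZval]⟩
    · rw [hcard]
      have hc1 := (hcm t ht r hr).1
      have : (m:ℝ) ≤ (c t r : ℝ) := by exact_mod_cast hc1
      calc (L:ℝ)^((1:ℝ)/4) ≤ (m:ℝ) := key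
        _ ≤ (c t r : ℝ) := this
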